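/- Let ε ≥ 0, let ŷ : {−1,1}^n → ℝ^d, define LayerNorm(y) = (y − mean(y))/√(σ²(y)+ε) for y ∈ ℝ^d (where mean(y) is the average of the coordinates of y, subtracted coordinatewise, and σ²(y) is their variance), and set N(z) = √(σ²(ŷ(z))+ε). Let C > 1 be such that ‖ŷ(z)‖₂ ≤ C for all z ∈ {−1,1}^n, and fix x ∈ {−1,1}^n and i ∈ {1,…,n} with N(x) > 0 and N(x^{⊕i}) > 0. Then ‖LayerNorm(ŷ(x)) − LayerNorm(ŷ(x^{⊕i}))‖₂ ≤ 2·C·‖ŷ(x) − ŷ(x^{⊕i})‖₂·(1 + 1/N(x))·(1 + 1/N(x^{⊕i})). -/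

import Mathlib

open scoped BigOperators

noncomputable section

namespace SensTF

/-- Flip the `i`-th bit of `x`. -/
def flip {n : ℕ} (x : Fin n → Bool) (i : Fin n) : Fin n → Bool :=
  Function.update x i (!(x i))

/-- Euclidean norm of a vector in `ℝ^d`. -/
def enorm {d : ℕ} (v : Fin d → ℝ) : ℝ := Real.sqrt (∑ j : Fin d, (v j) ^ 2)

/-- Mean of the coordinates. -/
def vmean {d : ℕ} (v : Fin d → ℝ) : ℝ := (∑ j : Fin d, v j) / d

/-- Variance of the coordinates. -/
def vvar {d : ℕ} (v : Fin d → ℝ) : ℝ := (∑ j : Fin d, (v j - vmean v) ^ 2) / d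

/-- Layer norm with stabilizer `ε`. -/
def layerNorm {d : ℕ} (eps : ℝ) (v : Fin d → ℝ) : Fin d → ℝ :=
  fun j => (v j - vmean v) / Real.sqrt (vvar v + eps)

end SensTF

open SensTF

namespace SensTFAux

variable {d : ℕ}

lemma enorm_eq_norm (v : Fin d → ℝ) : SensTF.enorm v = ‖(WithLp.equiv 2 (Fin d → ℝ)).symm v‖ := by
  simp [SensTF.enorm, EuclideanSpace.norm_eq, sq_abs]

lemma enorm_nonneg' (v : Fin d → ℝ) : 0 ≤ SensTF.enorm v := Real.sqrt_nonneg _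

lemma enorm_add_le (f g : Fin d → ℝ) : SensTF.enorm (f + g) ≤ SensTF.enorm f + SensTF.enorm g := by
  rw [enorm_eq_norm, enorm_eq_norm, enorm_eq_norm, WithLp.equiv_symm_apply, WithLp.toLp_add]
  exact norm_add_le _ _

lemma enorm_smul' (c : ℝ) (f : Fin d → ℝ) : SensTF.enorm (c • f) = |c| * SensTF.enorm f := by
  rw [enorm_eq_norm, enorm_eq_norm, WithLp.equiv_symm_apply, WithLp.toLp_smul, norm_smul, Real.norm_eq_abs]

lemma abs_enorm_sub_enorm_le (f g : Fin d → ℝ) : |SensTF.enorm f - SensTF.enorm g| ≤ SensTF.enorm (f - g) := by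
  rw [enorm_eq_norm, enorm_eq_norm, enorm_eq_norm, WithLp.equiv_symm_apply, WithLp.toLp_sub]
  exact abs_norm_sub_norm_le _ _

lemma sum_eq_card_mul_vmean (w : Fin d → ℝ) : ∑ j, w j = (d : ℝ) * vmean w := by
  rcases Nat.eq_zero_or_pos d with h | h
  · subst h; simp
  · have : (d : ℝ) ≠ 0 := by positivity
    rw [vmean]; field_simp

lemma sq_enorm (f : Fin d → ℝ) : SensTF.enorm f ^ 2 = ∑ j, (f j) ^ 2 :=
  Real.sq_sqrt (by positivity)

lemma center_sq_sum (w : Fin d → ℝ) :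
    ∑ j, (w j - vmean w) ^ 2 = (∑ j, (w j) ^ 2) - (d : ℝ) * vmean w ^ 2 := by
  have h := sum_eq_card_mul_vmean w
  calc ∑ j, (w j - vmean w) ^ 2
      = ∑ j, ((w j) ^ 2 - 2 * vmean w * w j + vmean w ^ 2) :=
        Finset.sum_congr rfl fun j _ => by ring
    _ = (∑ j, (w j) ^ 2) - 2 * vmean w * (∑ j, w j) + (d : ℝ) * vmean w ^ 2 := by
        rw [Finset.sum_add_distrib, Finset.sum_sub_distrib, ← Finset.mul_sum,
          Finset.sum_const, Finset.card_univ, Fintype.card_fin, nsmul_eq_mul]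
    _ = (∑ j, (w j) ^ 2) - (d : ℝ) * vmean w ^ 2 := by rw [h]; ring

lemma enorm_center_le (w : Fin d → ℝ) :
    SensTF.enorm (fun j => w j - vmean w) ≤ SensTF.enorm w := by
  unfold SensTF.enorm
  apply Real.sqrt_le_sqrt
  rw [show (∑ j, (w j - vmean w) ^ 2) = _ from center_sq_sum w]
  nlinarith [sq_nonneg (vmean w), Nat.cast_nonneg (α := ℝ) d]

lemma card_mul_vvar (w : Fin d → ℝ) :
    (d : ℝ) * vvar w = ∑ j, (w j - vmean w) ^ 2 := by
  rcases Nat.eq_zero_or_pos d with h | h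
  · subst h; simp
  · have : (d : ℝ) ≠ 0 := by positivity
    rw [vvar]; field_simp

lemma vvar_nonneg (w : Fin d → ℝ) : 0 ≤ vvar w := by
  unfold vvar; positivity

lemma final_ineq (C D N1 N2 : ℝ) (hC : 1 < C) (hD : 0 ≤ D) (h1 : 0 < N1) (h2 : 0 < N2) :
    (1 / N1) * D + (D / (N1 * N2)) * C ≤ 2 * C * D * (1 + 1 / N1) * (1 + 1 / N2) := by
  have h12 : 0 < N1 * N2 := mul_pos h1 h2
  rw [← sub_nonneg]
  have expand : 2 * C * D * (1 + 1 / N1) * (1 + 1 / N2) - ((1 / N1) * D + (D / (N1 * N2)) * C) =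
      (2 * C * D * (N1 + 1) * (N2 + 1) - (D * N2 + D * C)) / (N1 * N2) := by
    field_simp
  rw [expand]
  apply div_nonneg _ h12.le
  nlinarith [mul_nonneg (mul_nonneg hD h2.le) (by linarith : (0:ℝ) ≤ 2 * C - 1),
    mul_nonneg hD (by linarith : (0:ℝ) ≤ C),
    mul_nonneg (mul_nonneg (mul_nonneg hD h1.le) h2.le) (by linarith : (0:ℝ) ≤ C),
    mul_nonneg (mul_nonneg hD h1.le) (by linarith : (0:ℝ) ≤ C)]

end SensTFAux

open SensTFAux

set_option maxHeartbeats 1000000 in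
/-- Lemma: influence of layer norm.
With `N(z) = √(σ²(ŷ(z)) + ε)` and `‖ŷ(z)‖₂ ≤ C` (`C > 1`), if `N(x) > 0` and
`N(x^{⊕i}) > 0`, then
`‖LN(ŷ(x)) − LN(ŷ(x^{⊕i}))‖₂ ≤ 2C‖ŷ(x) − ŷ(x^{⊕i})‖₂ (1 + 1/N(x)) (1 + 1/N(x^{⊕i}))`. -/
theorem statement13 {n d : ℕ} (eps : ℝ) (heps : 0 ≤ eps)
    (yhat : (Fin n → Bool) → Fin d → ℝ)
    (C : ℝ) (hC : 1 < C)
    (hbound : ∀ z : Fin n → Bool, SensTF.enorm (yhat z) ≤ C)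
    (x : Fin n → Bool) (i : Fin n)
    (hNx : 0 < Real.sqrt (vvar (yhat x) + eps))
    (hNxi : 0 < Real.sqrt (vvar (yhat (flip x i)) + eps)) :
    SensTF.enorm (layerNorm eps (yhat x) - layerNorm eps (yhat (flip x i))) ≤
      2 * C * SensTF.enorm (yhat x - yhat (flip x i)) *
        (1 + 1 / Real.sqrt (vvar (yhat x) + eps)) *
        (1 + 1 / Real.sqrt (vvar (yhat (flip x i)) + eps)) := by
  have hvvu := vvar_nonneg (yhat x)
  have hvvv := vvar_nonneg (yhat (flip x i))
  have hD0 : 0 ≤ SensTF.enorm (yhat x - yhat (flip x i)) := enorm_nonneg' _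
  rcases Nat.eq_zero_or_pos d with hd | hd
  · subst hd
    have h0 : SensTF.enorm (layerNorm eps (yhat x) - layerNorm eps (yhat (flip x i))) = 0 := by
      simp [SensTF.enorm]
    rw [h0]
    have h2C : (0:ℝ) ≤ 2 * C := by linarith
    exact mul_nonneg (mul_nonneg (mul_nonneg h2C hD0) (by positivity)) (by positivity)
  -- main case : 0 < d
  set u := yhat x with hu
  set v := yhat (flip x i) with hv
  set N1 := Real.sqrt (vvar u + eps) with hN1def
  set N2 := Real.sqrt (vvar v + eps) with hN2def
  have hN1sq : N1 ^ 2 = vvar u + eps := Real.sq_sqrt (by linarith)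
  have hN2sq : N2 ^ 2 = vvar v + eps := Real.sq_sqrt (by linarith)
  have hN1ne : N1 ≠ 0 := ne_of_gt hNx
  have hN2ne : N2 ≠ 0 := ne_of_gt hNxi
  have hdpos : (0:ℝ) < d := by exact_mod_cast hd
  have hd1 : (1:ℝ) ≤ (d:ℝ) := by exact_mod_cast hd
  -- notation for the centered vectors
  set a : Fin d → ℝ := fun j => u j - vmean u with ha
  set b : Fin d → ℝ := fun j => v j - vmean v with hb
  set A := SensTF.enorm a with hA
  set B := SensTF.enorm b with hB
  set D := SensTF.enorm (u - v) with hD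
  set E := SensTF.enorm (a - b) with hE
  have hA0 : 0 ≤ A := enorm_nonneg' _
  have hB0 : 0 ≤ B := enorm_nonneg' _
  have hE0 : 0 ≤ E := enorm_nonneg' _
  have hA2 : A ^ 2 = (d:ℝ) * vvar u := by
    rw [hA, sq_enorm]
    simpa [ha] using (card_mul_vvar u).symm
  have hB2 : B ^ 2 = (d:ℝ) * vvar v := by
    rw [hB, sq_enorm]
    simpa [hb] using (card_mul_vvar v).symm
  -- mean of the difference
  have hm : vmean (u - v) = vmean u - vmean v := by
    simp [vmean, Pi.sub_apply, Finset.sum_sub_distrib, sub_div]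
  have hab : a - b = fun j => (u - v) j - vmean (u - v) := by
    funext j
    simp [ha, hb, hm, Pi.sub_apply]
    ring
  have hED : E ≤ D := by
    rw [hE, hab, hD]
    exact enorm_center_le (u - v)
  have hBC : B ≤ C := by
    rw [hB, hb]
    exact (enorm_center_le v).trans (hbound (flip x i))
  -- A ≤ √d * N1, B ≤ √d * N2
  have hsd : Real.sqrt d ^ 2 = (d:ℝ) := Real.sq_sqrt (by positivity)
  have hsd0 : 0 ≤ Real.sqrt d := Real.sqrt_nonneg _
  have hAle : A ≤ Real.sqrt d * N1 := by
    have h1 : A ^ 2 ≤ (Real.sqrt d * N1) ^ 2 := by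
      rw [mul_pow, hsd, hN1sq, hA2]
      nlinarith [mul_nonneg hdpos.le heps]
    calc A = Real.sqrt (A ^ 2) := (Real.sqrt_sq hA0).symm
      _ ≤ Real.sqrt ((Real.sqrt d * N1) ^ 2) := Real.sqrt_le_sqrt h1
      _ = Real.sqrt d * N1 := Real.sqrt_sq (by positivity)
  have hBle : B ≤ Real.sqrt d * N2 := by
    have h1 : B ^ 2 ≤ (Real.sqrt d * N2) ^ 2 := by
      rw [mul_pow, hsd, hN2sq, hB2]
      nlinarith [mul_nonneg hdpos.le heps]
    calc B = Real.sqrt (B ^ 2) := (Real.sqrt_sq hB0).symm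
      _ ≤ Real.sqrt ((Real.sqrt d * N2) ^ 2) := Real.sqrt_le_sqrt h1
      _ = Real.sqrt d * N2 := Real.sqrt_sq (by positivity)
  -- |N1 - N2| ≤ D
  have hABE : |A - B| ≤ E := by
    rw [hA, hB, hE]
    exact abs_enorm_sub_enorm_le a b
  have hA2B2 : (A ^ 2 - B ^ 2) ^ 2 ≤ E ^ 2 * ((d:ℝ) * (N1 + N2) ^ 2) := by
    have e2 : (A - B) ^ 2 ≤ E ^ 2 := by
      calc (A - B) ^ 2 = |A - B| ^ 2 := (sq_abs _).symm
        _ ≤ E ^ 2 := pow_le_pow_left₀ (abs_nonneg _) hABE 2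
    have e3 : (A + B) ^ 2 ≤ (d:ℝ) * (N1 + N2) ^ 2 := by
      have hsum : A + B ≤ Real.sqrt d * (N1 + N2) := by
        have := add_le_add hAle hBle
        linarith [this]
      calc (A + B) ^ 2 ≤ (Real.sqrt d * (N1 + N2)) ^ 2 :=
            pow_le_pow_left₀ (by linarith) hsum 2
        _ = (d:ℝ) * (N1 + N2) ^ 2 := by rw [mul_pow, hsd]
    calc (A ^ 2 - B ^ 2) ^ 2 = (A - B) ^ 2 * (A + B) ^ 2 := by ring
      _ ≤ E ^ 2 * ((d:ℝ) * (N1 + N2) ^ 2) :=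
        mul_le_mul e2 e3 (sq_nonneg _) (sq_nonneg _)
  have hED2 : E ^ 2 ≤ D ^ 2 := pow_le_pow_left₀ hE0 hED 2
  have step : (N1 - N2) ^ 2 * (d:ℝ) ≤ E ^ 2 := by
    have hP : (0:ℝ) < (N1 + N2) ^ 2 * (d:ℝ) := by positivity
    have h' : ((N1 - N2) ^ 2 * (d:ℝ)) * ((N1 + N2) ^ 2 * (d:ℝ)) ≤
        E ^ 2 * ((N1 + N2) ^ 2 * (d:ℝ)) := by
      have key : (N1 - N2) ^ 2 * (N1 + N2) ^ 2 * (d:ℝ) ^ 2 = (A ^ 2 - B ^ 2) ^ 2 := by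
        have hAB : A ^ 2 - B ^ 2 = (N1 ^ 2 - N2 ^ 2) * d := by
          rw [hA2, hB2, hN1sq, hN2sq]; ring
        rw [hAB]; ring
      calc ((N1 - N2) ^ 2 * (d:ℝ)) * ((N1 + N2) ^ 2 * (d:ℝ))
          = (N1 - N2) ^ 2 * (N1 + N2) ^ 2 * (d:ℝ) ^ 2 := by ring
        _ = (A ^ 2 - B ^ 2) ^ 2 := key
        _ ≤ E ^ 2 * ((d:ℝ) * (N1 + N2) ^ 2) := hA2B2
        _ = E ^ 2 * ((N1 + N2) ^ 2 * (d:ℝ)) := by ring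
    exact le_of_mul_le_mul_right h' hP
  have hNsub2 : (N1 - N2) ^ 2 ≤ D ^ 2 := by
    have t := mul_nonneg (sq_nonneg (N1 - N2)) (by linarith : (0:ℝ) ≤ (d:ℝ) - 1)
    nlinarith [t]
  have hND : |N1 - N2| ≤ D := by
    calc |N1 - N2| = Real.sqrt ((N1 - N2) ^ 2) := (Real.sqrt_sq_eq_abs _).symm
      _ ≤ Real.sqrt (D ^ 2) := Real.sqrt_le_sqrt hNsub2
      _ = D := Real.sqrt_sq hD0
  -- decomposition of the layer norm difference
  have hdecomp : layerNorm eps u - layerNorm eps v =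
      (1 / N1) • (a - b) + (1 / N1 - 1 / N2) • b := by
    funext j
    simp only [Pi.sub_apply, Pi.add_apply, Pi.smul_apply, smul_eq_mul, layerNorm,
      ha, hb, ← hN1def, ← hN2def]
    field_simp
    ring
  have hmain : SensTF.enorm (layerNorm eps u - layerNorm eps v) ≤ (1 / N1) * E + |1 / N1 - 1 / N2| * B := by
    rw [hdecomp]
    refine (enorm_add_le _ _).trans ?_
    rw [enorm_smul', enorm_smul', abs_of_pos (by positivity : (0:ℝ) < 1 / N1), hE, hB]
  have habs : |1 / N1 - 1 / N2| ≤ D / (N1 * N2) := by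
    have heq : 1 / N1 - 1 / N2 = (N2 - N1) / (N1 * N2) := by
      field_simp
    rw [heq, abs_div, abs_of_pos (mul_pos hNx hNxi), abs_sub_comm]
    exact (div_le_div_iff_of_pos_right (mul_pos hNx hNxi)).mpr hND
  calc SensTF.enorm (layerNorm eps u - layerNorm eps v)
      ≤ (1 / N1) * E + |1 / N1 - 1 / N2| * B := hmain
    _ ≤ (1 / N1) * D + (D / (N1 * N2)) * C := by
        have h1 : (1 / N1) * E ≤ (1 / N1) * D := by
          apply mul_le_mul_of_nonneg_left hED (by positivity)
        have h2 : |1 / N1 - 1 / N2| * B ≤ (D / (N1 * N2)) * C := by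
          apply mul_le_mul habs hBC hB0 (by positivity)
        linarith
    _ ≤ 2 * C * D * (1 + 1 / N1) * (1 + 1 / N2) :=
        final_ineq C D N1 N2 hC hD0 hNx hNxi
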